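/- arXiv:0806.3641 — 4 statements merged into one kernel-verified Lean document; each statement's English description precedes it below -/
import Mathlib

section
/- The Bell polynomials B_n(q) = Σ_{k=0}^n S(n,k)q^k, where S(n,k) are the Stirling numbers of the second kind, are strongly q-log-convex: for all n ≥ m ≥ 1, the polynomial B_{m-1}(q)·B_{n+1}(q) − B_m(q)·B_n(q) has only nonnegative coefficients. -/
open Polynomial

/-- The Stirling numbers of the second kind: `S(0,0) = 1`, `S(n,k) = 0` for `k > n`,
and `S(n,k) = k·S(n-1,k) + S(n-1,k-1)` for `n, k ≥ 1`. -/
def stirling2 : ℕ → ℕ → ℕ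
  | 0, 0 => 1
  | 0, _ + 1 => 0
  | _ + 1, 0 => 0
  | n + 1, k + 1 => (k + 1) * stirling2 n (k + 1) + stirling2 n k

lemma stirling2_succ (n k : ℕ) :
    stirling2 (n + 1) (k + 1) = (k + 1) * stirling2 n (k + 1) + stirling2 n k := rfl

lemma stirling2_zero (n : ℕ) : stirling2 (n + 1) 0 = 0 := rfl

lemma stirling2_eq_zero : ∀ {n k : ℕ}, n < k → stirling2 n k = 0
  | 0, _ + 1, _ => rfl
  | n + 1, k + 1, h => by
      rw [stirling2_succ, stirling2_eq_zero (by omega : n < k + 1),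
        stirling2_eq_zero (by omega : n < k)]
      ring
  | _ + 1, 0, h => absurd h (by omega)

lemma stirling2_pos : ∀ n k : ℕ, 1 ≤ k → k ≤ n → 0 < stirling2 n k
  | 0, _, h1, h2 => by omega
  | n + 1, k + 1, _, h2 => by
      rw [stirling2_succ]
      rcases Nat.eq_zero_or_pos k with rfl | hk
      · rcases Nat.eq_zero_or_pos n with rfl | hn
        · simp [stirling2]
        · have := stirling2_pos n 1 le_rfl hn
          positivity
      · have := stirling2_pos n k hk (by omega)
        positivity

/-- Row "one-step TP2": `S(n,j)S(n,k+1) ≤ S(n,j+1)S(n,k)` for `j ≤ k`. -/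
lemma rowV : ∀ n j k : ℕ, j ≤ k →
    stirling2 n j * stirling2 n (k + 1) ≤ stirling2 n (j + 1) * stirling2 n k
  | 0, j, k, h => by
      have : stirling2 0 (k + 1) = 0 := rfl
      simp [this]
  | n + 1, 0, k, h => by simp [stirling2_zero]
  | n + 1, j + 1, 0, h => by omega
  | n + 1, p + 1, q + 1, h => by
      have hpq : p ≤ q := by omega
      rcases eq_or_lt_of_le hpq with rfl | hlt
      · rw [mul_comm]
      · have h1 := rowV n p (q + 1) (by omega)
        have h2 := rowV n (p + 1) (q + 1) (by omega)
        have h3 := rowV n p q (by omega)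
        have h4 := rowV n (p + 1) q (by omega)
        rw [stirling2_succ n p, stirling2_succ n (q + 1), stirling2_succ n (p + 1),
          stirling2_succ n q]
        zify at h1 h2 h3 h4 ⊢
        nlinarith [mul_le_mul_of_nonneg_left h2 (show (0:ℤ) ≤ ((p:ℤ)+1)*((q:ℤ)+2) by positivity),
          mul_le_mul_of_nonneg_left h1 (show (0:ℤ) ≤ ((q:ℤ)+2) by positivity),
          mul_le_mul_of_nonneg_left h4 (show (0:ℤ) ≤ ((p:ℤ)+2) by positivity),
          h3,
          mul_nonneg (mul_nonneg (show (0:ℤ) ≤ (stirling2 n (p+2) : ℤ) by positivity)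
            (show (0:ℤ) ≤ (stirling2 n (q+1) : ℤ) by positivity))
            (show (0:ℤ) ≤ (q:ℤ) - p by omega)]

/-- TP2 for consecutive rows of the Stirling triangle. -/
lemma consecTP2 (n j k : ℕ) (h : j ≤ k) :
    stirling2 n k * stirling2 (n + 1) j ≤ stirling2 n j * stirling2 (n + 1) k := by
  rcases j with _ | p
  · simp [stirling2_zero]
  · rcases k with _ | q
    · omega
    · have hv := rowV n p q (by omega)
      rw [stirling2_succ n p, stirling2_succ n q]
      nlinarith [Nat.mul_le_mul_left ((q - p) : ℕ)
          (Nat.le_refl (stirling2 n (p+1) * stirling2 n (q+1))),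
        Nat.mul_le_mul_right (stirling2 n (p+1) * stirling2 n (q+1)) (show p + 1 ≤ q + 1 by omega)]

/-- General TP2 for the Stirling triangle (rows `a` and `a + d`). -/
lemma stirlingTP2 : ∀ (d a j k : ℕ), j ≤ k →
    stirling2 a k * stirling2 (a + d) j ≤ stirling2 a j * stirling2 (a + d) k
  | 0, a, j, k, h => by simp only [Nat.add_zero]; rw [mul_comm]
  | d + 1, a, j, k, h => by
      have IH := stirlingTP2 d a j k h
      have W := consecTP2 (a + d) j k h
      rcases Nat.eq_zero_or_pos j with rfl | hj
      · rcases Nat.eq_zero_or_pos k with rfl | hk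
        · rw [mul_comm]
        · rw [show a + (d+1) = (a+d) + 1 by omega, stirling2_zero]
          simp
      · by_cases hk : k ≤ a + d
        · have pj : 0 < stirling2 (a + d) j := stirling2_pos _ _ hj (by omega)
          have pk : 0 < stirling2 (a + d) k := stirling2_pos _ _ (by omega) hk
          have hm := Nat.mul_le_mul IH W
          rw [show a + (d+1) = (a+d) + 1 by omega]
          have hpos : 0 < stirling2 (a+d) j * stirling2 (a+d) k := Nat.mul_pos pj pk
          refine Nat.le_of_mul_le_mul_left ?_ hpos
          calc stirling2 (a+d) j * stirling2 (a+d) k * (stirling2 a k * stirling2 (a+d+1) j)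
              = (stirling2 a k * stirling2 (a+d) j) * (stirling2 (a+d) k * stirling2 (a+d+1) j) := by
                ring
            _ ≤ (stirling2 a j * stirling2 (a+d) k) * (stirling2 (a+d) j * stirling2 (a+d+1) k) :=
                hm
            _ = stirling2 (a+d) j * stirling2 (a+d) k * (stirling2 a j * stirling2 (a+d+1) k) := by
                ring
        · have : stirling2 a k = 0 := stirling2_eq_zero (by omega)
          simp [this]

lemma stirlingTP2' (a b j k : ℕ) (hab : a ≤ b) (hjk : j ≤ k) :
    stirling2 a k * stirling2 b j ≤ stirling2 a j * stirling2 b k := by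
  obtain ⟨d, rfl⟩ := Nat.exists_eq_add_of_le hab
  exact stirlingTP2 d a j k hjk

/-- The Bell polynomial `B_n(q) = Σ_{k=0}^n S(n,k) q^k`. -/
noncomputable def bellPoly (n : ℕ) : Polynomial ℝ :=
  ∑ k ∈ Finset.range (n + 1), C ((stirling2 n k : ℝ)) * X ^ k

lemma bellPoly_coeff (n k : ℕ) : (bellPoly n).coeff k = (stirling2 n k : ℝ) := by
  rw [bellPoly, Polynomial.finset_sum_coeff]
  simp only [Polynomial.coeff_C_mul, Polynomial.coeff_X_pow, mul_ite, mul_one, mul_zero]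
  rw [Finset.sum_ite_eq (Finset.range (n + 1)) k (fun j => ((stirling2 n j : ℝ)))]
  split
  · rfl
  · rw [stirling2_eq_zero (by simp_all [Finset.mem_range])]
    simp

lemma sum_shift_right (c b i : ℕ) :
    ∑ p ∈ Finset.HasAntidiagonal.antidiagonal (i + 1), (stirling2 c p.1 : ℝ) * (stirling2 (b + 1) p.2 : ℝ) =
      (∑ p ∈ Finset.HasAntidiagonal.antidiagonal (i + 1),
        (p.2 : ℝ) * (stirling2 c p.1 : ℝ) * (stirling2 b p.2 : ℝ))
      + ∑ p ∈ Finset.HasAntidiagonal.antidiagonal i, (stirling2 c p.1 : ℝ) * (stirling2 b p.2 : ℝ) := by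
  rw [Finset.Nat.sum_antidiagonal_succ'
      (f := fun p : ℕ × ℕ => (stirling2 c p.1 : ℝ) * (stirling2 (b + 1) p.2 : ℝ)),
    Finset.Nat.sum_antidiagonal_succ'
      (f := fun p : ℕ × ℕ => (p.2 : ℝ) * (stirling2 c p.1 : ℝ) * (stirling2 b p.2 : ℝ))]
  simp only [stirling2_zero, Nat.cast_zero, mul_zero, zero_mul, zero_add, Nat.cast_ofNat]
  rw [← Finset.sum_add_distrib]
  exact Finset.sum_congr rfl fun p hp => by rw [stirling2_succ]; push_cast; ring

lemma sum_shift_left (c b i : ℕ) :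
    ∑ p ∈ Finset.HasAntidiagonal.antidiagonal (i + 1), (stirling2 (c + 1) p.1 : ℝ) * (stirling2 b p.2 : ℝ) =
      (∑ p ∈ Finset.HasAntidiagonal.antidiagonal (i + 1),
        (p.1 : ℝ) * (stirling2 c p.1 : ℝ) * (stirling2 b p.2 : ℝ))
      + ∑ p ∈ Finset.HasAntidiagonal.antidiagonal i, (stirling2 c p.1 : ℝ) * (stirling2 b p.2 : ℝ) := by
  rw [Finset.Nat.sum_antidiagonal_succ
      (f := fun p : ℕ × ℕ => (stirling2 (c + 1) p.1 : ℝ) * (stirling2 b p.2 : ℝ)),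
    Finset.Nat.sum_antidiagonal_succ
      (f := fun p : ℕ × ℕ => (p.1 : ℝ) * (stirling2 c p.1 : ℝ) * (stirling2 b p.2 : ℝ))]
  simp only [stirling2_zero, Nat.cast_zero, mul_zero, zero_mul, zero_add]
  rw [← Finset.sum_add_distrib]
  exact Finset.sum_congr rfl fun p hp => by rw [stirling2_succ]; push_cast; ring

/-- The key coefficient identity: the coefficient of `B_a·B_{b+1} − B_{a+1}·B_b` at `q^i`
equals `Σ_{j+k=i} (k−j)·S(a,j)·S(b,k)`. -/
lemma coeff_eq (a b i : ℕ) :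
    (bellPoly a * bellPoly (b + 1) - bellPoly (a + 1) * bellPoly b).coeff i =
    ∑ p ∈ Finset.HasAntidiagonal.antidiagonal i,
      ((p.2 : ℝ) - (p.1 : ℝ)) * (stirling2 a p.1 : ℝ) * (stirling2 b p.2 : ℝ) := by
  rw [Polynomial.coeff_sub, Polynomial.coeff_mul, Polynomial.coeff_mul,
    ← Finset.sum_sub_distrib]
  simp only [bellPoly_coeff]
  rcases i with _ | i
  · simp [Finset.Nat.antidiagonal_zero, stirling2_zero]
  · have h1 := sum_shift_right a b i
    have h2 := sum_shift_left a b i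
    rw [Finset.sum_sub_distrib, h1, h2, add_sub_add_right_eq_sub, ← Finset.sum_sub_distrib]
    exact Finset.sum_congr rfl fun p hp => by ring

lemma key_nonneg (a b : ℕ) (hab : a ≤ b) (i : ℕ) :
    0 ≤ ∑ p ∈ Finset.HasAntidiagonal.antidiagonal i,
      ((p.2 : ℝ) - (p.1 : ℝ)) * (stirling2 a p.1 : ℝ) * (stirling2 b p.2 : ℝ) := by
  set F : ℕ × ℕ → ℝ :=
    fun p => ((p.2 : ℝ) - (p.1 : ℝ)) * (stirling2 a p.1 : ℝ) * (stirling2 b p.2 : ℝ) with hF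
  have hsw : ∑ p ∈ Finset.HasAntidiagonal.antidiagonal i, F p.swap = ∑ p ∈ Finset.HasAntidiagonal.antidiagonal i, F p :=
    Finset.Nat.sum_antidiagonal_swap
  have hpair : ∀ p : ℕ × ℕ, 0 ≤ F p.swap + F p := by
    intro ⟨j, k⟩
    simp only [hF, Prod.swap_prod_mk]
    rcases le_total j k with h | h
    · have ht : (stirling2 a k * stirling2 b j : ℝ) ≤ (stirling2 a j * stirling2 b k : ℝ) := by
        exact_mod_cast stirlingTP2' a b j k hab h
      have hc : (j : ℝ) ≤ k := by exact_mod_cast h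
      nlinarith [mul_nonneg (sub_nonneg.2 hc) (sub_nonneg.2 ht)]
    · have ht : (stirling2 a j * stirling2 b k : ℝ) ≤ (stirling2 a k * stirling2 b j : ℝ) := by
        exact_mod_cast stirlingTP2' a b k j hab h
      have hc : (k : ℝ) ≤ j := by exact_mod_cast h
      nlinarith [mul_nonneg (sub_nonneg.2 hc) (sub_nonneg.2 ht)]
  have h2 : 0 ≤ ∑ p ∈ Finset.HasAntidiagonal.antidiagonal i, (F p.swap + F p) :=
    Finset.sum_nonneg fun p _ => hpair p
  rw [Finset.sum_add_distrib, hsw] at h2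
  linarith

/-- The Bell polynomials are strongly `q`-log-convex: for all
`n ≥ m ≥ 1`, the polynomial `B_{m-1}·B_{n+1} − B_m·B_n` has nonnegative coefficients. -/
theorem bellPoly_strongly_q_log_convex :
    ∀ m n : ℕ, 1 ≤ m → m ≤ n →
      ∀ i : ℕ,
        0 ≤ (bellPoly (m - 1) * bellPoly (n + 1) - bellPoly m * bellPoly n).coeff i := by
  intro m n hm hmn i
  obtain ⟨a, rfl⟩ : ∃ a, m = a + 1 := ⟨m - 1, by omega⟩
  have hsub : a + 1 - 1 = a := by omega
  rw [hsub, coeff_eq a n i]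
  exact key_nonneg a n (by omega) i
end

section
/- The Bessel-type polynomials P_n(q) = Σ_{k=0}^n ((n+k)!/((n-k)!·k!))·q^k are strongly q-log-convex: for all n ≥ m ≥ 1, the polynomial P_{m-1}(q)·P_{n+1}(q) − P_m(q)·P_n(q) has only nonnegative coefficients. -/
open Polynomial

/-- The Bessel-type polynomial `P_n(q) = Σ_{k=0}^n ((n+k)!/((n-k)!·k!))·q^k`. -/
noncomputable def besselPoly (n : ℕ) : Polynomial ℝ :=
  ∑ k ∈ Finset.range (n + 1),
    C ((Nat.factorial (n + k) : ℝ)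
        / ((Nat.factorial (n - k) : ℝ) * (Nat.factorial k : ℝ))) * X ^ k

lemma bessel_coeff (n k : ℕ) :
    (besselPoly n).coeff k =
      if k ≤ n then ((Nat.factorial (n + k) : ℝ)
        / ((Nat.factorial (n - k) : ℝ) * (Nat.factorial k : ℝ))) else 0 := by
  simp [besselPoly, coeff_X_pow, Finset.sum_ite_eq, Nat.lt_succ_iff]

lemma fact_pos_real (n : ℕ) : (0:ℝ) < (Nat.factorial n : ℝ) := by
  exact_mod_cast Nat.factorial_pos n

lemma bessel_coeff_nonneg (n k : ℕ) : 0 ≤ (besselPoly n).coeff k := by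
  rw [bessel_coeff]
  split
  · positivity
  · exact le_refl 0

lemma bessel_coeff_mono (n k : ℕ) :
    (besselPoly n).coeff k ≤ (besselPoly (n+1)).coeff k := by
  rw [bessel_coeff, bessel_coeff]
  by_cases h : k ≤ n
  · rw [if_pos h, if_pos (h.trans (Nat.le_succ n))]
    rw [div_le_div_iff₀ (by positivity) (by positivity)]
    have h1 : n + 1 + k = (n + k) + 1 := by omega
    have h2 : n + 1 - k = (n - k) + 1 := by omega
    rw [h1, h2, Nat.factorial_succ, Nat.factorial_succ]
    push_cast
    have hk : ((n - k : ℕ):ℝ) ≤ (n:ℝ) := by exact_mod_cast Nat.sub_le n k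
    have hk2 : ((n - k : ℕ):ℝ) + 1 ≤ (n:ℝ) + k + 1 := by
      have : (0:ℝ) ≤ k := Nat.cast_nonneg k
      linarith
    nlinarith [mul_le_mul_of_nonneg_right hk2
      (le_of_lt (mul_pos (mul_pos (fact_pos_real (n+k)) (fact_pos_real (n-k))) (fact_pos_real k)))]
  · rw [if_neg h]
    exact bessel_coeff_nonneg _ _ |>.trans_eq (by rw [bessel_coeff])

lemma bessel_rec (n : ℕ) :
    besselPoly (n+1) = C (4*(n:ℝ)+2) * X * besselPoly n + besselPoly (n-1) := by
  ext k
  rw [coeff_add, mul_assoc, coeff_C_mul]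
  cases k with
  | zero =>
    have h1 : (((n+1).factorial : ℕ) : ℝ) ≠ 0 := Nat.cast_ne_zero.mpr (Nat.factorial_ne_zero _)
    have h2 : (((n-1).factorial : ℕ) : ℝ) ≠ 0 := Nat.cast_ne_zero.mpr (Nat.factorial_ne_zero _)
    simp [bessel_coeff]
    rw [div_self h1, div_self h2]
  | succ k =>
    rw [coeff_X_mul, bessel_coeff, bessel_coeff, bessel_coeff]
    rcases Nat.lt_or_ge n 1 with hn | hn
    · interval_cases n
      rcases Nat.eq_zero_or_pos k with rfl | hk
      · norm_num [Nat.factorial]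
      · rw [if_neg (by omega), if_neg (by omega), if_neg (by omega)]
        ring
    · by_cases h1 : k + 2 ≤ n
      · obtain ⟨d, rfl⟩ : ∃ d, n = k + 2 + d := ⟨n - (k+2), by omega⟩
        rw [if_pos (by omega), if_pos (by omega), if_pos (by omega)]
        rw [show k + 2 + d + 1 + (k + 1) = (2*k+d+2)+1+1 from by omega,
            show k + 2 + d + 1 - (k+1) = d + 2 from by omega,
            show k + 2 + d + k = (2*k+d+2) from by omega,
            show k + 2 + d - k = d + 2 from by omega,
            show k + 2 + d - 1 + (k + 1) = (2*k+d+2) from by omega,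
            show k + 2 + d - 1 - (k+1) = d from by omega,
            show d + 2 = (d+1)+1 from by omega]
        rw [Nat.factorial_succ ((2*k+d+2)+1), Nat.factorial_succ (2*k+d+2),
            Nat.factorial_succ (d+1), Nat.factorial_succ d, Nat.factorial_succ k]
        push_cast
        have hA := fact_pos_real (2*k+d+2)
        have hB := fact_pos_real d
        have hC := fact_pos_real k
        field_simp
        ring
      · by_cases h2 : k + 1 = n
        · obtain rfl : n = k + 1 := h2.symm
          rw [if_pos (by omega), if_pos (by omega), if_neg (by omega)]
          rw [show k + 1 + 1 + (k + 1) = (2*k+1)+1+1 from by omega,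
              show k + 1 + 1 - (k+1) = 1 from by omega,
              show k + 1 + k = (2*k+1) from by omega,
              show k + 1 - k = 1 from by omega]
          rw [Nat.factorial_succ ((2*k+1)+1), Nat.factorial_succ (2*k+1),
              Nat.factorial_succ k]
          push_cast
          have hA := fact_pos_real (2*k+1)
          have hC := fact_pos_real k
          norm_num [Nat.factorial]
          field_simp
          ring
        · by_cases h3 : k = n
          · obtain rfl : k = n := h3
            rw [if_pos (by omega), if_pos (by omega), if_neg (by omega)]
            rw [show k + 1 + (k + 1) = (2*k)+1+1 from by omega,
                show k + 1 - (k+1) = 0 from by omega,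
                show k + k = 2*k from by omega,
                show k - k = 0 from by omega]
            rw [Nat.factorial_succ ((2*k)+1), Nat.factorial_succ (2*k)]
            push_cast
            have hA := fact_pos_real (2*k)
            have hC := fact_pos_real k
            norm_num [Nat.factorial]
            field_simp
            ring
          · rw [if_neg (by omega), if_neg (by omega), if_neg (by omega)]
            ring

lemma bessel_zero : besselPoly 0 = 1 := by
  simp [besselPoly, Nat.factorial]

lemma bessel_one : besselPoly 1 = C 2 * X + 1 := by
  rw [besselPoly]
  rw [Finset.sum_range_succ, Finset.sum_range_one]
  norm_num [Nat.factorial]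
  ring

lemma bessel_rec2 (n : ℕ) :
    besselPoly (n+2) = C (4*(n:ℝ)+6) * X * besselPoly (n+1) + besselPoly n := by
  have h := bessel_rec (n+1)
  rw [show n+1+1 = n+2 from by omega, show n+1-1 = n from by omega] at h
  rw [h]
  push_cast
  ring_nf

lemma bessel_rec3 (n : ℕ) :
    besselPoly (n+3) = C (4*(n:ℝ)+10) * X * besselPoly (n+2) + besselPoly (n+1) := by
  have h := bessel_rec2 (n+1)
  rw [show n+1+2 = n+3 from by omega, show n+1+1 = n+2 from by omega] at h
  rw [h]
  push_cast
  ring_nf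

lemma bessel_rec4 (n : ℕ) :
    besselPoly (n+4) = C (4*(n:ℝ)+14) * X * besselPoly (n+3) + besselPoly (n+2) := by
  have h := bessel_rec2 (n+2)
  rw [show n+2+2 = n+4 from by omega, show n+2+1 = n+3 from by omega] at h
  rw [h]
  push_cast
  ring_nf

lemma dominate (b i : ℕ) :
    (besselPoly (b+1)).coeff (i+1) ≤
      (4*(b:ℝ)+4) * (besselPoly (b+1)).coeff i + (besselPoly b).coeff (i+1) := by
  rcases Nat.lt_or_ge b i with hbi | hbi
  · -- i ≥ b+1, so LHS = 0
    rw [bessel_coeff, if_neg (by omega)]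
    have h1 := bessel_coeff_nonneg (b+1) i
    have h2 := bessel_coeff_nonneg b (i+1)
    have hb : (0:ℝ) ≤ (b:ℝ) := Nat.cast_nonneg b
    nlinarith
  · rcases Nat.lt_or_ge i b with hib | hib
    · -- i + 1 ≤ b : main case
      obtain ⟨d, rfl⟩ : ∃ d, b = i + 1 + d := ⟨b - (i+1), by omega⟩
      rw [bessel_coeff, bessel_coeff, bessel_coeff,
        if_pos (by omega), if_pos (by omega), if_pos (by omega)]
      rw [show i+1+d+1+(i+1) = (2*i+d+2)+1 from by omega,
          show i+1+d+1-(i+1) = d+1 from by omega,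
          show i+1+d+1+i = 2*i+d+2 from by omega,
          show i+1+d+1-i = (d+1)+1 from by omega,
          show i+1+d+(i+1) = 2*i+d+2 from by omega,
          show i+1+d-(i+1) = d from by omega]
      rw [Nat.factorial_succ (2*i+d+2), Nat.factorial_succ (d+1),
          Nat.factorial_succ d, Nat.factorial_succ i]
      push_cast
      set A := ((2*i+d+2).factorial : ℝ) with hA
      set D := (d.factorial : ℝ) with hD
      set I := (i.factorial : ℝ) with hI
      have hApos : 0 < A := fact_pos_real _
      have hDpos : 0 < D := fact_pos_real _
      have hIpos : 0 < I := fact_pos_real _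
      have hi : (0:ℝ) ≤ (i:ℝ) := Nat.cast_nonneg i
      have hd : (0:ℝ) ≤ (d:ℝ) := Nat.cast_nonneg d
      have hW : (0:ℝ) ≤ A / (((d:ℝ)+2)*((d:ℝ)+1)*D*(((i:ℝ)+1)*I)) := by positivity
      calc ((2*(i:ℝ)+(d:ℝ)+2)+1) * A / (((d:ℝ)+1)*D * (((i:ℝ)+1)*I))
          = ((2*(i:ℝ)+(d:ℝ)+3)*((d:ℝ)+2)) * (A / (((d:ℝ)+2)*((d:ℝ)+1)*D*(((i:ℝ)+1)*I))) := by
            field_simp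
            ring
        _ ≤ ((4*((i:ℝ)+1+(d:ℝ))+4)*((i:ℝ)+1) + ((d:ℝ)+2)*((d:ℝ)+1)) *
              (A / (((d:ℝ)+2)*((d:ℝ)+1)*D*(((i:ℝ)+1)*I))) := by
            apply mul_le_mul_of_nonneg_right _ hW
            nlinarith [mul_nonneg hi hd, mul_nonneg hi hi]
        _ = (4*((i:ℝ)+1+(d:ℝ))+4) * (A / ((((d:ℝ)+1)+1)*(((d:ℝ)+1)*D) * I))
              + A / (D * (((i:ℝ)+1)*I)) := by
            field_simp
            ring
    · -- i = b
      obtain rfl : i = b := le_antisymm hbi hib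
      rw [bessel_coeff, bessel_coeff, bessel_coeff,
        if_pos (by omega), if_pos (by omega), if_neg (by omega)]
      rw [show i+1+(i+1) = (2*i+1)+1 from by omega,
          show i+1-(i+1) = 0 from by omega,
          show i+1+i = 2*i+1 from by omega,
          show i+1-i = 1 from by omega]
      rw [Nat.factorial_succ (2*i+1), Nat.factorial_succ i]
      norm_num [Nat.factorial]
      push_cast
      set A := ((2*i+1).factorial : ℝ) with hA
      set B := (i.factorial : ℝ) with hB
      have hApos : 0 < A := fact_pos_real _
      have hBpos : 0 < B := fact_pos_real _
      have hb : (0:ℝ) ≤ (i:ℝ) := Nat.cast_nonneg i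
      have hF : (0:ℝ) < ((2*i).factorial : ℝ) := fact_pos_real _
      rw [div_le_iff₀ (by positivity)]
      have hexp : (4 * (i:ℝ) + 4) * ((2 * (i:ℝ) + 1) * ((2*i).factorial : ℝ) / B) * (((i:ℝ) + 1) * B)
          = (4 * (i:ℝ) + 4) * ((2 * (i:ℝ) + 1) * ((2*i).factorial : ℝ)) * ((i:ℝ) + 1) := by
        field_simp
      rw [hexp]
      nlinarith [mul_pos hF hBpos, mul_nonneg (mul_nonneg hb hb) hF.le,
        mul_nonneg hb hF.le, mul_nonneg (mul_nonneg (mul_nonneg hb hb) hb) hF.le]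

lemma mul_coeff_nonneg {p q : Polynomial ℝ} (hp : ∀ i, 0 ≤ p.coeff i)
    (hq : ∀ i, 0 ≤ q.coeff i) : ∀ i, 0 ≤ (p * q).coeff i := by
  intro i
  rw [coeff_mul]
  exact Finset.sum_nonneg fun x _ => mul_nonneg (hp _) (hq _)

lemma mul_coeff_le {p p' q q' : Polynomial ℝ} (hp0 : ∀ i, 0 ≤ p.coeff i)
    (hq0 : ∀ i, 0 ≤ q.coeff i) (hp : ∀ i, p.coeff i ≤ p'.coeff i)
    (hq : ∀ i, q.coeff i ≤ q'.coeff i) : ∀ i, (p * q).coeff i ≤ (p' * q').coeff i := by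
  intro i
  rw [coeff_mul, coeff_mul]
  apply Finset.sum_le_sum
  intro x _
  exact mul_le_mul (hp _) (hq _) (hq0 _) ((hp0 _).trans (hp _))

lemma CX_mul_coeff_nonneg {c : ℝ} (hc : 0 ≤ c) {p : Polynomial ℝ}
    (hp : ∀ i, 0 ≤ p.coeff i) : ∀ i, 0 ≤ (C c * X * p).coeff i := by
  intro i
  rw [mul_assoc, coeff_C_mul]
  cases i with
  | zero => simp
  | succ i =>
    rw [coeff_X_mul]
    exact mul_nonneg hc (hp i)

lemma bessel_prod_diff_nonneg (a b : ℕ) :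
    ∀ i, 0 ≤ (besselPoly (a+1) * besselPoly (b+1) - besselPoly a * besselPoly b).coeff i := by
  intro i
  rw [coeff_sub, sub_nonneg]
  exact mul_coeff_le (bessel_coeff_nonneg a) (bessel_coeff_nonneg b)
    (bessel_coeff_mono a) (bessel_coeff_mono b) i

lemma bessel_diff_nonneg (b : ℕ) :
    ∀ i, 0 ≤ (besselPoly (b+1) - besselPoly b).coeff i := by
  intro i
  rw [coeff_sub, sub_nonneg]
  exact bessel_coeff_mono b i

/-- `P_1 P_{b+2} - P_{b+1}` has nonnegative coefficients. -/
lemma bessel_one_mul_diff_nonneg (b : ℕ) :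
    ∀ i, 0 ≤ (besselPoly 1 * besselPoly (b+2) - besselPoly (b+1)).coeff i := by
  have hid : besselPoly 1 * besselPoly (b+2) - besselPoly (b+1)
      = (besselPoly (b+2) - besselPoly (b+1)) + C 2 * X * besselPoly (b+2) := by
    rw [bessel_one]; ring
  rw [hid]
  intro i
  rw [coeff_add]
  exact add_nonneg (bessel_diff_nonneg (b+1) i)
    (CX_mul_coeff_nonneg (by norm_num) (bessel_coeff_nonneg (b+2)) i)

/-- the base case `m = 1` combination. -/
lemma base1_nonneg (b : ℕ) :
    ∀ i, 0 ≤ (C (4*(b:ℝ)+4) * X * besselPoly (b+1)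
        + (besselPoly b - besselPoly (b+1))).coeff i := by
  intro i
  rw [coeff_add, mul_assoc, coeff_C_mul, coeff_sub]
  cases i with
  | zero =>
    simp only [coeff_X_mul_zero, mul_zero, zero_add]
    rw [bessel_coeff, bessel_coeff, if_pos (by omega), if_pos (by omega)]
    simp only [Nat.add_zero, Nat.sub_zero, Nat.factorial_zero, Nat.cast_one, mul_one]
    rw [div_self (by positivity), div_self (by positivity)]
    norm_num
  | succ i =>
    rw [coeff_X_mul]
    have := dominate b i
    linarith

lemma bessel_id1 (b : ℕ) :
    besselPoly 0 * besselPoly (b+2) - besselPoly 1 * besselPoly (b+1)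
      = C (4*(b:ℝ)+4) * X * besselPoly (b+1) + (besselPoly b - besselPoly (b+1)) := by
  rw [bessel_rec2 b, bessel_zero, bessel_one]
  simp only [map_add, map_mul, map_ofNat]
  ring

lemma bessel_two : besselPoly 2 = C (6:ℝ) * X * besselPoly 1 + besselPoly 0 := by
  have h := bessel_rec2 0
  norm_num at h
  exact h

lemma bessel_id2 (b : ℕ) :
    besselPoly 1 * besselPoly (b+3) - besselPoly 2 * besselPoly (b+2)
      = C (4*(b:ℝ)+4) * X * (besselPoly 1 * besselPoly (b+2) - besselPoly (b+1))
        + (besselPoly (b+1) - besselPoly b) := by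
  rw [bessel_rec3 b, bessel_two, bessel_rec2 b, bessel_one, bessel_zero]
  simp only [map_add, map_mul, map_ofNat]
  ring

lemma bessel_id3 (a b : ℕ) :
    besselPoly (a+2) * besselPoly (b+4) - besselPoly (a+3) * besselPoly (b+3)
      = C (4*(b:ℝ) - 4*(a:ℝ) + 4) * X
          * (besselPoly (a+2) * besselPoly (b+3) - besselPoly (a+1) * besselPoly (b+2))
        + (besselPoly a * besselPoly (b+2) - besselPoly (a+1) * besselPoly (b+1)) := by
  rw [bessel_rec4 b, bessel_rec3 a, bessel_rec3 b, bessel_rec2 a, bessel_rec2 b]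
  simp only [map_sub, map_add, map_mul, map_ofNat]
  ring

/-- The Bessel-type polynomials are strongly `q`-log-convex: for all
`n ≥ m ≥ 1`, the polynomial `P_{m-1}·P_{n+1} − P_m·P_n` has nonnegative coefficients. -/
theorem besselPoly_strongly_q_log_convex :
    ∀ m n : ℕ, 1 ≤ m → m ≤ n →
      ∀ i : ℕ,
        0 ≤ (besselPoly (m - 1) * besselPoly (n + 1)
              - besselPoly m * besselPoly n).coeff i := by
  intro m
  induction m using Nat.strong_induction_on with
  | _ m IH =>
    rcases m with _ | (_ | (_ | a))
    · intro n h1 hmn i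
      exact absurd h1 (by norm_num)
    · -- m = 1
      intro n h1 hmn i
      obtain ⟨b, rfl⟩ : ∃ b, n = b + 1 := ⟨n - 1, by omega⟩
      rw [show (1:ℕ) - 1 = 0 from rfl, show b + 1 + 1 = b + 2 from by omega,
        bessel_id1 b]
      exact base1_nonneg b i
    · -- m = 2
      intro n h1 hmn i
      obtain ⟨b, rfl⟩ : ∃ b, n = b + 2 := ⟨n - 2, by omega⟩
      rw [show (1+1:ℕ) - 1 = 1 from rfl, show b + 2 + 1 = b + 3 from by omega,
        show (1+1:ℕ) = 2 from rfl, bessel_id2 b]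
      rw [coeff_add]
      refine add_nonneg ?_ (bessel_diff_nonneg b i)
      refine CX_mul_coeff_nonneg ?_ (bessel_one_mul_diff_nonneg b) i
      positivity
    · -- m = a + 3
      intro n h1 hmn i
      obtain ⟨b, rfl⟩ : ∃ b, n = b + 3 := ⟨n - 3, by omega⟩
      have hab : a ≤ b := by omega
      rw [show a + 1 + 1 + 1 - 1 = a + 2 from by omega,
        show b + 3 + 1 = b + 4 from by omega,
        show a + 1 + 1 + 1 = a + 3 from by omega, bessel_id3 a b]
      rw [coeff_add]
      refine add_nonneg ?_ ?_
      · refine CX_mul_coeff_nonneg ?_ ?_ i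
        · have : (a:ℝ) ≤ (b:ℝ) := by exact_mod_cast hab
          linarith
        · exact bessel_prod_diff_nonneg (a+1) (b+2)
      · exact IH (a+1) (by omega) (b+1) (by omega) (by omega) i
end

section
/- The Ramanujan polynomials R_n(q) = Σ_{k=0}^{n-1} r(n,k)q^k, where the coefficients r(n,k) satisfy r(1,0) = 1, r(n,k) = 0 unless n ≥ 1 and 0 ≤ k ≤ n−1, and r(n,k) = (n−1)·r(n-1,k) + (n+k−2)·r(n-1,k-1), form a strongly q-log-convex sequence: for all n ≥ m ≥ 2, the polynomial R_{m-1}(q)·R_{n+1}(q) − R_m(q)·R_n(q) has only nonnegative coefficients. -/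
open Polynomial

/-- The number `r(n,k)` of rooted labeled trees on `n` vertices with `k` improper
edges: `r(1,0) = 1`, `r(n,k) = 0` unless `n ≥ 1` and `0 ≤ k ≤ n−1`, and
`r(n,k) = (n−1)·r(n-1,k) + (n+k−2)·r(n-1,k-1)`. -/
def ramanujanCoeff : ℕ → ℕ → ℕ
  | 0, _ => 0
  | 1, 0 => 1
  | 1, _ + 1 => 0
  | m + 2, 0 => (m + 1) * ramanujanCoeff (m + 1) 0
  | m + 2, k + 1 => (m + 1) * ramanujanCoeff (m + 1) (k + 1)
      + (m + k + 1) * ramanujanCoeff (m + 1) k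

/-- The Ramanujan polynomial `R_n(q) = Σ_{k=0}^{n-1} r(n,k) q^k`. -/
noncomputable def ramanujanPoly (n : ℕ) : Polynomial ℝ :=
  ∑ k ∈ Finset.range n, C ((ramanujanCoeff n k : ℝ)) * X ^ k

set_option maxHeartbeats 1600000

open Polynomial Finset

lemma rc_zero (k : ℕ) : ramanujanCoeff 0 k = 0 := rfl
lemma rc_ss (m k : ℕ) : ramanujanCoeff (m+2) (k+1) = (m+1) * ramanujanCoeff (m+1) (k+1) + (m+k+1) * ramanujanCoeff (m+1) k := rfl
lemma rc_sz (m : ℕ) : ramanujanCoeff (m+2) 0 = (m+1) * ramanujanCoeff (m+1) 0 := rfl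

lemma rc_eq_zero : ∀ n k, n ≤ k → ramanujanCoeff n k = 0
  | 0, _, _ => rfl
  | 1, _+1, _ => rfl
  | n+2, 0, h => absurd h (by omega)
  | n+2, k+1, h => by
      rw [rc_ss, rc_eq_zero (n+1) (k+1) (by omega), rc_eq_zero (n+1) k (by omega)]; ring

/-- generalized log-concavity of rows -/
lemma rc_row : ∀ n t i j : ℕ, i ≤ j → ramanujanCoeff n (j+t) * ramanujanCoeff n i ≤ ramanujanCoeff n (i+t) * ramanujanCoeff n j
  | n, 0, i, j, _ => le_of_eq (mul_comm _ _)
  | 0, _+1, _, _, _ => by simp [rc_zero]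
  | 1, t+1, i, j, _ => by
      have : ramanujanCoeff 1 (j+(t+1)) = 0 := rc_eq_zero 1 _ (by omega)
      simp [this]
  | n+2, t'+1, i, j, hij => by
      rcases eq_or_lt_of_le hij with rfl | hlt
      · exact le_of_eq rfl
      rcases Nat.eq_zero_or_pos i with rfl | hi
      · -- i = 0 case
        obtain ⟨j', rfl⟩ : ∃ j', j = j'+1 := ⟨j-1, by omega⟩
        rw [show j'+1+(t'+1) = (j'+t'+1)+1 from by ring, Nat.zero_add (t'+1),
          rc_ss, rc_sz, rc_ss, rc_ss]
        have h1 := rc_row (n+1) (t'+1) 0 (j'+1) (by omega)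
        have hP := rc_row (n+1) (t'+1) 0 j' (by omega)
        have hQ := rc_row (n+1) t' 0 (j'+1) (by omega)
        have H1 := Nat.mul_le_mul_left ((n+1)*(n+1)) h1
        have H2 := Nat.mul_le_mul_left ((n+1)*(j'+1)) hP
        have H2b : (n+1)*(j'+1)*(ramanujanCoeff (n+1) (t'+1) * ramanujanCoeff (n+1) j') ≤
            (n+1)*(n+j'+1)*(ramanujanCoeff (n+1) (t'+1) * ramanujanCoeff (n+1) j') :=
          Nat.mul_le_mul_right _ (Nat.mul_le_mul_left _ (by omega))
        have H3 := Nat.mul_le_mul_left ((n+1)*(n+t'+1)) hQ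
        have H4 : 0 ≤ (n+t'+1)*(n+j'+1)*(ramanujanCoeff (n+1) t' * ramanujanCoeff (n+1) j') := Nat.zero_le _
        ring_nf at H1 H2 H2b H3 H4 ⊢
        linarith [H1, H2, H2b, H3, H4]
      · obtain ⟨i', rfl⟩ : ∃ i', i = i'+1 := ⟨i-1, by omega⟩
        obtain ⟨d, rfl⟩ : ∃ d, j = i'+1+(d+1) := ⟨j-i'-2, by omega⟩
        rw [show i'+1+(d+1)+(t'+1) = (i'+d+t'+2)+1 from by ring,
          show i'+1+(t'+1) = (i'+t'+1)+1 from by ring,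
          show i'+1+(d+1) = (i'+d+1)+1 from by ring, rc_ss, rc_ss, rc_ss, rc_ss]
        have h1 := rc_row (n+1) (t'+1) (i'+1) (i'+d+2) (by omega)
        have h4 := rc_row (n+1) (t'+1) i' (i'+d+1) (by omega)
        have hU := rc_row (n+1) (t'+2) i' (i'+d+1) (by omega)
        have hVQ := rc_row (n+1) t' (i'+1) (i'+d+2) (by omega)
        have hVP := rc_row (n+1) (t'+1) (i'+1) (i'+d+1) (by omega)
        have H1 := Nat.mul_le_mul_left ((n+1)*(n+1)) h1
        have H2 := Nat.mul_le_mul_left ((n+1)*(n+i'+1)) hU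
        have H3 := Nat.mul_le_mul_left ((n+1)*(d+1)) hVP
        have H4 := Nat.mul_le_mul_left ((n+1)*(n+i'+t'+2)) hVQ
        have H5 := Nat.mul_le_mul
          (show (n+(i'+d+t'+2)+1)*(n+i'+1) ≤ (n+(i'+t'+1)+1)*(n+(i'+d+1)+1) from by nlinarith)
          h4
        ring_nf at H1 H2 H3 H4 H5 ⊢
        linarith [H1, H2, H3, H4, H5]
-- continuing: cross-row lemma
/-- cross-row generalized minors -/
lemma rc_mono (a : ℕ) (ha : 1 ≤ a) : ∀ b, a ≤ b → ∀ t i j : ℕ, i ≤ j →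
    ramanujanCoeff a (j+t) * ramanujanCoeff b i ≤ ramanujanCoeff a (i+t) * ramanujanCoeff b j := by
  intro b hb
  induction b, hb using Nat.le_induction with
  | base => exact fun t i j h => rc_row a t i j h
  | succ b hab IH =>
    intro t i j hij
    rcases eq_or_lt_of_le hij with rfl | hlt
    · exact le_of_eq rfl
    obtain ⟨b', rfl⟩ : ∃ b', b = b'+1 := ⟨b-1, by omega⟩
    obtain ⟨j', rfl⟩ : ∃ j', j = j'+1 := ⟨j-1, by omega⟩
    rcases Nat.eq_zero_or_pos i with rfl | hi
    · rw [rc_sz, rc_ss, Nat.zero_add]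
      have hA := IH t 0 (j'+1) (by omega)
      rw [Nat.zero_add] at hA
      calc ramanujanCoeff a (j'+1+t) * ((b'+1) * ramanujanCoeff (b'+1) 0)
          = (b'+1) * (ramanujanCoeff a (j'+1+t) * ramanujanCoeff (b'+1) 0) := by ring
        _ ≤ (b'+1) * (ramanujanCoeff a t * ramanujanCoeff (b'+1) (j'+1)) := Nat.mul_le_mul_left _ hA
        _ ≤ ramanujanCoeff a t * ((b'+1) * ramanujanCoeff (b'+1) (j'+1) + (b'+j'+1) * ramanujanCoeff (b'+1) j') := by
            have : 0 ≤ ramanujanCoeff a t * ((b'+j'+1) * ramanujanCoeff (b'+1) j') := Nat.zero_le _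
            nlinarith
    · obtain ⟨i', rfl⟩ : ∃ i', i = i'+1 := ⟨i-1, by omega⟩
      rw [rc_ss, rc_ss]
      have hA := IH t (i'+1) (j'+1) (by omega)
      have hB : ramanujanCoeff a (j'+1+t) * ramanujanCoeff (b'+1) i' ≤ ramanujanCoeff a (i'+1+t) * ramanujanCoeff (b'+1) j' := by
        have := IH (t+1) i' j' (by omega)
        calc ramanujanCoeff a (j'+1+t) * ramanujanCoeff (b'+1) i' = ramanujanCoeff a (j'+(t+1)) * ramanujanCoeff (b'+1) i' := by ring_nf
          _ ≤ ramanujanCoeff a (i'+(t+1)) * ramanujanCoeff (b'+1) j' := this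
          _ = ramanujanCoeff a (i'+1+t) * ramanujanCoeff (b'+1) j' := by ring_nf
      have H1 := Nat.mul_le_mul_left (b'+1) hA
      have H2 := Nat.mul_le_mul (show b'+i'+1 ≤ b'+j'+1 from by omega) hB
      ring_nf at H1 H2 ⊢
      linarith [H1, H2]
-- sum machinery
def sc (b k : ℕ) : ℕ := match k with | 0 => 0 | k+1 => (b+k) * ramanujanCoeff b k

lemma rc_succ_eq (b : ℕ) (hb : 1 ≤ b) (k : ℕ) : ramanujanCoeff (b+1) k = b * ramanujanCoeff b k + sc b k := by
  obtain ⟨b', rfl⟩ : ∃ b', b = b'+1 := ⟨b-1, by omega⟩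
  cases k with
  | zero => rw [rc_sz]; simp [sc]
  | succ k => rw [rc_ss]; simp only [sc]; ring

lemma pair_le (a b N : ℕ) (ha : 1 ≤ a) (hab : a ≤ b) :
    ∑ p ∈ Finset.HasAntidiagonal.antidiagonal N, p.1 * (ramanujanCoeff a p.1 * ramanujanCoeff b p.2) ≤
    ∑ p ∈ Finset.HasAntidiagonal.antidiagonal N, p.2 * (ramanujanCoeff a p.1 * ramanujanCoeff b p.2) := by
  have key : ∀ p : ℕ × ℕ,
      p.1 * (ramanujanCoeff a p.1 * ramanujanCoeff b p.2) + p.2 * (ramanujanCoeff a p.2 * ramanujanCoeff b p.1) ≤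
      p.2 * (ramanujanCoeff a p.1 * ramanujanCoeff b p.2) + p.1 * (ramanujanCoeff a p.2 * ramanujanCoeff b p.1) := by
    rintro ⟨i, j⟩
    rcases le_total i j with h | h
    · obtain ⟨d, rfl⟩ : ∃ d, j = i + d := ⟨j-i, by omega⟩
      have hm : ramanujanCoeff a (i+d) * ramanujanCoeff b i ≤ ramanujanCoeff a i * ramanujanCoeff b (i+d) := by
        simpa using rc_mono a ha b hab 0 i (i+d) (by omega)
      simp only
      nlinarith [Nat.mul_le_mul_left d hm]
    · obtain ⟨d, rfl⟩ : ∃ d, i = j + d := ⟨i-j, by omega⟩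
      have hm : ramanujanCoeff a (j+d) * ramanujanCoeff b j ≤ ramanujanCoeff a j * ramanujanCoeff b (j+d) := by
        simpa using rc_mono a ha b hab 0 j (j+d) (by omega)
      simp only
      nlinarith [Nat.mul_le_mul_left d hm]
  have swap1 : ∑ p ∈ Finset.HasAntidiagonal.antidiagonal N, p.1 * (ramanujanCoeff a p.1 * ramanujanCoeff b p.2)
      = ∑ p ∈ Finset.HasAntidiagonal.antidiagonal N, p.2 * (ramanujanCoeff a p.2 * ramanujanCoeff b p.1) :=
    (Finset.Nat.sum_antidiagonal_swap (f := fun p => p.1 * (ramanujanCoeff a p.1 * ramanujanCoeff b p.2))).symm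
  have swap2 : ∑ p ∈ Finset.HasAntidiagonal.antidiagonal N, p.2 * (ramanujanCoeff a p.1 * ramanujanCoeff b p.2)
      = ∑ p ∈ Finset.HasAntidiagonal.antidiagonal N, p.1 * (ramanujanCoeff a p.2 * ramanujanCoeff b p.1) :=
    (Finset.Nat.sum_antidiagonal_swap (f := fun p => p.2 * (ramanujanCoeff a p.1 * ramanujanCoeff b p.2))).symm
  have h2 : ∑ p ∈ Finset.HasAntidiagonal.antidiagonal N, (p.1 * (ramanujanCoeff a p.1 * ramanujanCoeff b p.2) + p.2 * (ramanujanCoeff a p.2 * ramanujanCoeff b p.1))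
      ≤ ∑ p ∈ Finset.HasAntidiagonal.antidiagonal N, (p.2 * (ramanujanCoeff a p.1 * ramanujanCoeff b p.2) + p.1 * (ramanujanCoeff a p.2 * ramanujanCoeff b p.1)) :=
    Finset.sum_le_sum (fun p _ => key p)
  rw [Finset.sum_add_distrib, Finset.sum_add_distrib, ← swap1, ← swap2] at h2
  omega

lemma keyN (a b N : ℕ) (ha : 1 ≤ a) (hab : a ≤ b) :
    ∑ p ∈ Finset.HasAntidiagonal.antidiagonal N, ramanujanCoeff (a+1) p.1 * ramanujanCoeff b p.2 ≤
    ∑ p ∈ Finset.HasAntidiagonal.antidiagonal N, ramanujanCoeff a p.1 * ramanujanCoeff (b+1) p.2 := by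
  have hb : 1 ≤ b := le_trans ha hab
  have el : ∑ p ∈ Finset.HasAntidiagonal.antidiagonal N, ramanujanCoeff (a+1) p.1 * ramanujanCoeff b p.2
      = a * (∑ p ∈ Finset.HasAntidiagonal.antidiagonal N, ramanujanCoeff a p.1 * ramanujanCoeff b p.2)
        + ∑ p ∈ Finset.HasAntidiagonal.antidiagonal N, sc a p.1 * ramanujanCoeff b p.2 := by
    rw [Finset.mul_sum, ← Finset.sum_add_distrib]
    exact Finset.sum_congr rfl fun p _ => by rw [rc_succ_eq a ha]; ring
  have er : ∑ p ∈ Finset.HasAntidiagonal.antidiagonal N, ramanujanCoeff a p.1 * ramanujanCoeff (b+1) p.2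
      = b * (∑ p ∈ Finset.HasAntidiagonal.antidiagonal N, ramanujanCoeff a p.1 * ramanujanCoeff b p.2)
        + ∑ p ∈ Finset.HasAntidiagonal.antidiagonal N, ramanujanCoeff a p.1 * sc b p.2 := by
    rw [Finset.mul_sum, ← Finset.sum_add_distrib]
    exact Finset.sum_congr rfl fun p _ => by rw [rc_succ_eq b hb]; ring
  rw [el, er]
  have hmain : ∑ p ∈ Finset.HasAntidiagonal.antidiagonal N, sc a p.1 * ramanujanCoeff b p.2
      ≤ ∑ p ∈ Finset.HasAntidiagonal.antidiagonal N, ramanujanCoeff a p.1 * sc b p.2 := by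
    cases N with
    | zero => simp [Finset.Nat.antidiagonal_zero, sc]
    | succ M =>
      rw [Finset.Nat.sum_antidiagonal_succ
        (f := fun p => sc a p.1 * ramanujanCoeff b p.2),
        Finset.Nat.sum_antidiagonal_succ'
        (f := fun p => ramanujanCoeff a p.1 * sc b p.2)]
      simp only [sc]
      have e1 : ∑ p ∈ Finset.HasAntidiagonal.antidiagonal M, (a+p.1) * ramanujanCoeff a p.1 * ramanujanCoeff b p.2
          = a * (∑ p ∈ Finset.HasAntidiagonal.antidiagonal M, ramanujanCoeff a p.1 * ramanujanCoeff b p.2)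
            + ∑ p ∈ Finset.HasAntidiagonal.antidiagonal M, p.1 * (ramanujanCoeff a p.1 * ramanujanCoeff b p.2) := by
        rw [Finset.mul_sum, ← Finset.sum_add_distrib]
        exact Finset.sum_congr rfl fun p _ => by ring
      have e2 : ∑ p ∈ Finset.HasAntidiagonal.antidiagonal M, ramanujanCoeff a p.1 * ((b+p.2) * ramanujanCoeff b p.2)
          = b * (∑ p ∈ Finset.HasAntidiagonal.antidiagonal M, ramanujanCoeff a p.1 * ramanujanCoeff b p.2)
            + ∑ p ∈ Finset.HasAntidiagonal.antidiagonal M, p.2 * (ramanujanCoeff a p.1 * ramanujanCoeff b p.2) := by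
        rw [Finset.mul_sum, ← Finset.sum_add_distrib]
        exact Finset.sum_congr rfl fun p _ => by ring
      have hp := pair_le a b M ha hab
      have hmul : a * (∑ p ∈ Finset.HasAntidiagonal.antidiagonal M, ramanujanCoeff a p.1 * ramanujanCoeff b p.2)
          ≤ b * (∑ p ∈ Finset.HasAntidiagonal.antidiagonal M, ramanujanCoeff a p.1 * ramanujanCoeff b p.2) :=
        Nat.mul_le_mul_right _ hab
      calc (0:ℕ) * ramanujanCoeff b (M+1) + ∑ p ∈ Finset.HasAntidiagonal.antidiagonal M, (a+p.1) * ramanujanCoeff a p.1 * ramanujanCoeff b p.2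
          = a * (∑ p ∈ Finset.HasAntidiagonal.antidiagonal M, ramanujanCoeff a p.1 * ramanujanCoeff b p.2)
            + ∑ p ∈ Finset.HasAntidiagonal.antidiagonal M, p.1 * (ramanujanCoeff a p.1 * ramanujanCoeff b p.2) := by rw [e1]; ring
        _ ≤ b * (∑ p ∈ Finset.HasAntidiagonal.antidiagonal M, ramanujanCoeff a p.1 * ramanujanCoeff b p.2)
            + ∑ p ∈ Finset.HasAntidiagonal.antidiagonal M, p.2 * (ramanujanCoeff a p.1 * ramanujanCoeff b p.2) :=
              Nat.add_le_add hmul hp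
        _ ≤ ramanujanCoeff a (M+1) * 0 + ∑ p ∈ Finset.HasAntidiagonal.antidiagonal M, ramanujanCoeff a p.1 * ((b+p.2) * ramanujanCoeff b p.2) := by
              rw [e2]; omega
  have hmul2 : a * (∑ p ∈ Finset.HasAntidiagonal.antidiagonal N, ramanujanCoeff a p.1 * ramanujanCoeff b p.2)
      ≤ b * (∑ p ∈ Finset.HasAntidiagonal.antidiagonal N, ramanujanCoeff a p.1 * ramanujanCoeff b p.2) := Nat.mul_le_mul_right _ hab
  omega

lemma coeff_ramanujanPoly (n k : ℕ) :
    (ramanujanPoly n).coeff k = (ramanujanCoeff n k : ℝ) := by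
  unfold ramanujanPoly
  rw [Polynomial.finset_sum_coeff]
  simp only [Polynomial.coeff_C_mul, Polynomial.coeff_X_pow, mul_ite, mul_one, mul_zero]
  by_cases h : k < n
  · rw [Finset.sum_ite_eq (Finset.range n) k fun j => ((ramanujanCoeff n j : ℝ))]
    simp [h]
  · rw [Finset.sum_ite_eq (Finset.range n) k fun j => ((ramanujanCoeff n j : ℝ))]
    simp only [Finset.mem_range, h, if_false]
    rw [rc_eq_zero n k (by omega)]
    simp

/-- The Ramanujan polynomials form a strongly `q`-log-convex
sequence: for all `n ≥ m ≥ 2`, the polynomial `R_{m-1}·R_{n+1} − R_m·R_n` has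
nonnegative coefficients. -/
theorem ramanujanPoly_strongly_q_log_convex :
    ∀ m n : ℕ, 2 ≤ m → m ≤ n →
      ∀ i : ℕ,
        0 ≤ (ramanujanPoly (m - 1) * ramanujanPoly (n + 1)
              - ramanujanPoly m * ramanujanPoly n).coeff i := by
  intro m n h2 hmn N
  obtain ⟨a, rfl⟩ : ∃ a, m = a + 1 := ⟨m - 1, by omega⟩
  have ha : 1 ≤ a := by omega
  have han : a ≤ n := by omega
  simp only [Nat.add_sub_cancel]
  rw [Polynomial.coeff_sub, sub_nonneg, Polynomial.coeff_mul, Polynomial.coeff_mul]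
  simp only [coeff_ramanujanPoly]
  exact_mod_cast keyN a n N ha han
end

section
/- Let T(n,k) = (n+k)!/((n-k)!·k!), extended by T(n,k) = 0 for k > n or k < 0. For n ≥ 1, 0 ≤ i ≤ 2n, and 0 ≤ k ≤ ⌊i/2⌋, define β_k(n,i) = T(n+1,k)T(n-1,i-k) + T(n+1,i-k)T(n-1,k) − 2T(n,i-k)T(n,k). Then for each fixed n and i, there exists an integer k' such that β_k(n,i) ≥ 0 for all k ≤ k' and β_k(n,i) ≤ 0 for all k' < k ≤ ⌊i/2⌋. -/
private def Nex (n i k : ℤ) : ℤ :=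
  (n + 1 + k) * (n - (i - k)) * (n + k) * (n + 1 - (i - k))
    + (n + 1 + (i - k)) * (n - k) * (n + (i - k)) * (n + 1 - k)
    - 2 * (n + 1 - k) * (n + k) * (n + 1 - (i - k)) * (n + (i - k))

private lemma Nex_mono (n i k₁ k₂ : ℤ) (hk1 : 0 ≤ k₁) (h12 : k₁ ≤ k₂)
    (hk2 : 2 * k₂ ≤ i) (hi : i ≤ 2 * n) (hn : 1 ≤ n)
    (h : Nex n i k₁ < 0) : Nex n i k₂ ≤ 0 := by
  have key₁ : 2 * Nex n i k₁ =
      (i - 2 * k₁) ^ 2 * (8 * n * (n + 1) - (i - 2)) + (i ^ 2 * (i - 2) - 4 * n * (n + 1) * i) := by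
    unfold Nex; ring
  have key₂ : 2 * Nex n i k₂ =
      (i - 2 * k₂) ^ 2 * (8 * n * (n + 1) - (i - 2)) + (i ^ 2 * (i - 2) - 4 * n * (n + 1) * i) := by
    unfold Nex; ring
  have hA : 0 ≤ 8 * n * (n + 1) - (i - 2) := by nlinarith
  have hd : (i - 2 * k₂) ^ 2 ≤ (i - 2 * k₁) ^ 2 := by nlinarith
  nlinarith [mul_le_mul_of_nonneg_right hd hA]

section Tlemmas

variable (T : ℕ → ℕ → ℝ)
    (hT : ∀ a b : ℕ, T a b =
      if b ≤ a then (Nat.factorial (a + b) : ℝ)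
        / ((Nat.factorial (a - b) : ℝ) * (Nat.factorial b : ℝ)) else 0)

include hT

private lemma T_nonneg (a b : ℕ) : 0 ≤ T a b := by
  rw [hT]; split
  · positivity
  · exact le_rfl

private lemma T_pos {a b : ℕ} (h : b ≤ a) : 0 < T a b := by
  rw [hT, if_pos h]
  have h1 : (0:ℝ) < (Nat.factorial (a + b) : ℝ) := by
    exact_mod_cast Nat.factorial_pos _
  have h2 : (0:ℝ) < (Nat.factorial (a - b) : ℝ) := by
    exact_mod_cast Nat.factorial_pos _
  have h3 : (0:ℝ) < (Nat.factorial b : ℝ) := by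
    exact_mod_cast Nat.factorial_pos _
  positivity

private lemma T_zero {a b : ℕ} (h : a < b) : T a b = 0 := by
  rw [hT, if_neg (by omega)]

private lemma Trec (a b : ℕ) :
    T (a + 1) b * ((a + 1 - b : ℕ) : ℝ) = ((a + 1 + b : ℕ) : ℝ) * T a b := by
  rcases le_or_gt b a with h | h
  · rw [hT, hT, if_pos (by omega : b ≤ a + 1), if_pos h]
    have h1 : a + 1 + b = (a + b) + 1 := by omega
    have h2 : a + 1 - b = (a - b) + 1 := by omega
    rw [h1, h2, Nat.factorial_succ, Nat.factorial_succ]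
    have f1 : (0:ℝ) < (Nat.factorial (a + b) : ℝ) := by exact_mod_cast Nat.factorial_pos _
    have f2 : (0:ℝ) < (Nat.factorial (a - b) : ℝ) := by exact_mod_cast Nat.factorial_pos _
    have f3 : (0:ℝ) < (Nat.factorial b : ℝ) := by exact_mod_cast Nat.factorial_pos _
    push_cast
    have f4 : (0:ℝ) < (a:ℝ) - (b:ℝ) + 1 := by
      have : (b:ℝ) ≤ (a:ℝ) := Nat.cast_le.mpr h
      linarith
    field_simp [f2.ne', f3.ne', f4.ne']
  · have hz : (a + 1 - b : ℕ) = 0 ∨ ¬ (b ≤ a + 1) := by omega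
    rcases hz with hz | hz
    · rw [hz, hT a b, if_neg (by omega)]
      simp
    · rw [hT a b, if_neg (by omega), hT, if_neg hz]
      simp

private lemma sign_eq (m j k : ℕ) (hk : k ≤ j) (hj : j ≤ m + 1) :
    (T (m + 2) k * T m j + T (m + 2) j * T m k - 2 * T (m + 1) j * T (m + 1) k) *
      (((m + 2 - k : ℕ) : ℝ) * ((m + 1 + k : ℕ) : ℝ) *
        ((m + 2 - j : ℕ) : ℝ) * ((m + 1 + j : ℕ) : ℝ))
    = T (m + 1) j * T (m + 1) k *
        ((Nex ((m : ℤ) + 1) ((j : ℤ) + (k : ℤ)) (k : ℤ) : ℤ) : ℝ) := by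
  have h1 := Trec T hT (m + 1) k
  have h2 := Trec T hT (m + 1) j
  have h3 := Trec T hT m k
  have h4 := Trec T hT m j
  -- rewrite (m+1+1) as m+2 in h1 h2
  have e12 : m + 1 + 1 = m + 2 := rfl
  rw [e12] at h1 h2
  have eu : ((m + 2 - k : ℕ) : ℝ) = (m : ℝ) + 2 - (k : ℝ) := by
    rw [Nat.cast_sub (by omega)]; push_cast; ring
  have ew : ((m + 1 - k : ℕ) : ℝ) = (m : ℝ) + 1 - (k : ℝ) := by
    rw [Nat.cast_sub (by omega)]; push_cast; ring
  have ep : ((m + 2 - j : ℕ) : ℝ) = (m : ℝ) + 2 - (j : ℝ) := by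
    rw [Nat.cast_sub (by omega)]; push_cast; ring
  have er : ((m + 1 - j : ℕ) : ℝ) = (m : ℝ) + 1 - (j : ℝ) := by
    rw [Nat.cast_sub (by omega)]; push_cast; ring
  have hN : ((Nex ((m : ℤ) + 1) ((j : ℤ) + (k : ℤ)) (k : ℤ) : ℤ) : ℝ) =
      ((m + 2 + k : ℕ) : ℝ) * ((m + 1 - j : ℕ) : ℝ) * ((m + 1 + k : ℕ) : ℝ) * ((m + 2 - j : ℕ) : ℝ)
      + ((m + 2 + j : ℕ) : ℝ) * ((m + 1 - k : ℕ) : ℝ) * ((m + 1 + j : ℕ) : ℝ) * ((m + 2 - k : ℕ) : ℝ)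
      - 2 * ((m + 2 - k : ℕ) : ℝ) * ((m + 1 + k : ℕ) : ℝ) * ((m + 2 - j : ℕ) : ℝ) * ((m + 1 + j : ℕ) : ℝ) := by
    rw [eu, ew, ep, er]
    unfold Nex
    push_cast
    ring
  rw [hN]
  linear_combination
    (((m + 1 + k : ℕ) : ℝ) * ((m + 2 - j : ℕ) : ℝ) * ((m + 1 + j : ℕ) : ℝ) * T m j) * h1
    + (((m + 1 + k : ℕ) : ℝ) * ((m + 1 + j : ℕ) : ℝ) * ((m + 2 - k : ℕ) : ℝ) * T m k) * h2
    - (((m + 2 + j : ℕ) : ℝ) * ((m + 1 + j : ℕ) : ℝ) * ((m + 2 - k : ℕ) : ℝ) * T (m + 1) j) * h3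
    - (((m + 1 + k : ℕ) : ℝ) * ((m + 2 - j : ℕ) : ℝ) * ((m + 2 + k : ℕ) : ℝ) * T (m + 1) k) * h4

end Tlemmas

/-- Let `T(n,k) = (n+k)!/((n-k)!·k!)`, extended by `0` for `k > n`.
For `n ≥ 1`, `0 ≤ i ≤ 2n` and `0 ≤ k ≤ ⌊i/2⌋`, let
`β_k(n,i) = T(n+1,k)T(n-1,i-k) + T(n+1,i-k)T(n-1,k) − 2T(n,i-k)T(n,k)`.
Then for each fixed `n` and `i` there is an integer `k'` with `β_k(n,i) ≥ 0` for
`k ≤ k'` and `β_k(n,i) ≤ 0` for `k' < k ≤ ⌊i/2⌋`. -/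
theorem bessel_beta_sign_change
    (T : ℕ → ℕ → ℝ)
    (hT : ∀ a b : ℕ, T a b =
      if b ≤ a then (Nat.factorial (a + b) : ℝ)
        / ((Nat.factorial (a - b) : ℝ) * (Nat.factorial b : ℝ)) else 0)
    (n i : ℕ) (hn : 1 ≤ n) (hi : i ≤ 2 * n)
    (β : ℕ → ℝ)
    (hβ : ∀ k : ℕ, β k =
      T (n + 1) k * T (n - 1) (i - k) + T (n + 1) (i - k) * T (n - 1) k
        - 2 * T n (i - k) * T n k) :
    ∃ k' : ℤ, ∀ k : ℕ, k ≤ i / 2 →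
      ((k : ℤ) ≤ k' → 0 ≤ β k) ∧ (k' < (k : ℤ) → β k ≤ 0) := by
  obtain ⟨m, rfl⟩ : ∃ m, n = m + 1 := ⟨n - 1, by omega⟩
  simp only [Nat.add_sub_cancel] at hβ
  -- core sign lemma: for k ≤ i/2, the sign of β k matches Nex
  have signβ : ∀ k : ℕ, k ≤ i / 2 → i - k ≤ m + 1 →
      ∃ D : ℝ, 0 < D ∧ ∃ P : ℝ, 0 < P ∧
        β k * D = P * ((Nex ((m : ℤ) + 1) (i : ℤ) (k : ℤ) : ℤ) : ℝ) := by
    intro k hk hjm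
    set j := i - k with hjdef
    have hkj : k ≤ j := by omega
    have hD : (0:ℝ) < ((m + 2 - k : ℕ) : ℝ) * ((m + 1 + k : ℕ) : ℝ) *
        ((m + 2 - j : ℕ) : ℝ) * ((m + 1 + j : ℕ) : ℝ) := by
      have a1 : 0 < m + 2 - k := by omega
      have a2 : 0 < m + 1 + k := by omega
      have a3 : 0 < m + 2 - j := by omega
      have a4 : 0 < m + 1 + j := by omega
      have b1 : (0:ℝ) < ((m + 2 - k : ℕ) : ℝ) := by exact_mod_cast a1
      have b2 : (0:ℝ) < ((m + 1 + k : ℕ) : ℝ) := by exact_mod_cast a2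
      have b3 : (0:ℝ) < ((m + 2 - j : ℕ) : ℝ) := by exact_mod_cast a3
      have b4 : (0:ℝ) < ((m + 1 + j : ℕ) : ℝ) := by exact_mod_cast a4
      positivity
    refine ⟨_, hD, T (m + 1) j * T (m + 1) k,
      mul_pos (T_pos T hT hjm) (T_pos T hT (by omega)), ?_⟩
    have hse := sign_eq T hT m j k hkj hjm
    have hik : ((j : ℤ) + (k : ℤ)) = (i : ℤ) := by omega
    rw [hik] at hse
    rw [hβ k, ← hjdef]
    convert hse using 3
  -- star: sign change propagation
  have star : ∀ k₁ k₂ : ℕ, k₁ ≤ k₂ → k₂ ≤ i / 2 → β k₁ < 0 → β k₂ ≤ 0 := by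
    intro k₁ k₂ h12 hk2 hneg
    have hk1 : k₁ ≤ i / 2 := le_trans h12 hk2
    -- first, i - k₁ ≤ m + 1, else β k₁ ≥ 0
    have hj1 : i - k₁ ≤ m + 1 := by
      by_contra hcon
      push_neg at hcon
      have z1 : T m (i - k₁) = 0 := T_zero T hT (by omega)
      have z2 : T (m + 1) (i - k₁) = 0 := T_zero T hT (by omega)
      have : 0 ≤ β k₁ := by
        rw [hβ, z1, z2]
        have := mul_nonneg (T_nonneg T hT (m + 2) (i - k₁)) (T_nonneg T hT m k₁)
        nlinarith [this]
      linarith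
    have hj2 : i - k₂ ≤ m + 1 := by omega
    obtain ⟨D₁, hD₁, P₁, hP₁, heq₁⟩ := signβ k₁ hk1 hj1
    obtain ⟨D₂, hD₂, P₂, hP₂, heq₂⟩ := signβ k₂ hk2 hj2
    have hN₁ : ((Nex ((m : ℤ) + 1) (i : ℤ) (k₁ : ℤ) : ℤ) : ℝ) < 0 := by
      have : β k₁ * D₁ < 0 := mul_neg_of_neg_of_pos hneg hD₁
      rw [heq₁] at this
      by_contra hc
      push_neg at hc
      nlinarith
    have hNZ₁ : Nex ((m : ℤ) + 1) (i : ℤ) (k₁ : ℤ) < 0 := by exact_mod_cast hN₁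
    have hNZ₂ : Nex ((m : ℤ) + 1) (i : ℤ) (k₂ : ℤ) ≤ 0 := by
      apply Nex_mono _ _ _ _ (by positivity) (by exact_mod_cast h12) (by omega) (by omega)
        (by omega) hNZ₁
    have hN₂ : ((Nex ((m : ℤ) + 1) (i : ℤ) (k₂ : ℤ) : ℤ) : ℝ) ≤ 0 := by exact_mod_cast hNZ₂
    have : β k₂ * D₂ ≤ 0 := by
      rw [heq₂]
      exact mul_nonpos_of_nonneg_of_nonpos (le_of_lt hP₂) hN₂
    nlinarith
  by_cases hneg : ∃ k, k ≤ i / 2 ∧ β k < 0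
  · classical
    refine ⟨(Nat.find hneg : ℤ) - 1, fun k hk => ⟨fun hle => ?_, fun hlt => ?_⟩⟩
    · have hlt' : k < Nat.find hneg := by omega
      have := Nat.find_min hneg hlt'
      push_neg at this
      exact this hk
    · obtain ⟨hfk, hfb⟩ := Nat.find_spec hneg
      exact star (Nat.find hneg) k (by omega) hk hfb
  · push_neg at hneg
    refine ⟨(i / 2 : ℕ), fun k hk => ⟨fun _ => hneg k hk, fun hlt => ?_⟩⟩
    exfalso
    have : ((i / 2 : ℕ) : ℤ) < (k : ℤ) := hlt
    omega
end
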